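/- Let f : (0,1) → ℝ be square-integrable and suppose that x ↦ f(x)/(1−x) is also square-integrable on (0,1). Let c_k = (2k+1)·∫₀¹ f(x)·P̃_k(x) dx denote the Fourier–Legendre coefficients of f. Then for every integer n ≥ 0, ∫₀¹ (f(x)/(1−x))·P̃_n(x) dx = ∫₀¹ f(x)/(1−x) dx − 2·∑_{m=1}^{n} (1/m)·∑_{k=0}^{m−1} c_k. -/

import Mathlib

open MeasureTheory

/-- The `n`-th Legendre polynomial, via the Rodrigues formula
`P_n(x) = (1/(2ⁿ n!)) dⁿ/dxⁿ (x²-1)ⁿ`. -/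
noncomputable def legendreP (n : ℕ) (x : ℝ) : ℝ :=
  (1 / ((2 : ℝ) ^ n * n.factorial)) * iteratedDeriv n (fun y : ℝ => (y ^ 2 - 1) ^ n) x

/-- The `n`-th shifted Legendre polynomial `P̃_n(x) = P_n(2x - 1)`. -/
noncomputable def shiftedLegendre (n : ℕ) (x : ℝ) : ℝ := legendreP n (2 * x - 1)

section Aux
open Polynomial


lemma iteratedDeriv_eval (k : ℕ) (p : Polynomial ℝ) :
    iteratedDeriv k (fun y : ℝ => p.eval y) = fun y => (derivative^[k] p).eval y := by
  induction k generalizing p with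
  | zero => simp
  | succ k ih =>
    rw [iteratedDeriv_succ', Function.iterate_succ_apply]
    have h : (deriv fun y : ℝ => p.eval y) = fun y : ℝ => (derivative p).eval y :=
      funext fun y => p.deriv
    rw [h, ih (derivative p)]


lemma iterD_X_mul (k : ℕ) (p : Polynomial ℝ) :
    derivative^[k] (X * p) = X * derivative^[k] p + (k : Polynomial ℝ) * derivative^[k - 1] p := by
  induction k generalizing p with
  | zero => simp
  | succ k ih =>
    rw [Function.iterate_succ_apply', ih]
    cases k with
    | zero => simp [derivative_mul]; ring
    | succ j =>
      simp only [Nat.add_sub_cancel]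
      rw [derivative_add, derivative_mul, derivative_mul, derivative_X, derivative_natCast]
      rw [← Function.iterate_succ_apply' derivative (j+1) p,
          ← Function.iterate_succ_apply' derivative j p]
      push_cast
      ring

lemma dX2 : derivative ((X : Polynomial ℝ)^2) = 2*X := by
  simp [derivative_X_pow, map_ofNat]
  norm_num

lemma iterD_q_mul (k : ℕ) (p : Polynomial ℝ) :
    derivative^[k] ((X ^ 2 - 1) * p) = (X ^ 2 - 1) * derivative^[k] p
      + 2 * (k : Polynomial ℝ) * X * derivative^[k - 1] p
      + (k : Polynomial ℝ) * ((k : Polynomial ℝ) - 1) * derivative^[k - 2] p := by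
  induction k generalizing p with
  | zero => simp
  | succ k ih =>
    rw [Function.iterate_succ_apply', ih]
    simp only [derivative_add, derivative_mul, derivative_sub, derivative_one,
      derivative_natCast, derivative_ofNat, derivative_X, derivative_zero, dX2]
    cases k with
    | zero =>
      simp [Function.iterate_succ_apply']
      ring
    | succ i =>
      cases i with
      | zero =>
        simp [Function.iterate_succ_apply']
        ring
      | succ j =>
        simp only [show j+1+1-1 = j+1 from rfl, show j+1+1-2 = j from rfl,
          show j+1-1 = j from rfl, Nat.add_sub_cancel, Nat.succ_eq_add_one]
        rw [← Function.iterate_succ_apply' derivative (j+1+1) p,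
            ← Function.iterate_succ_apply' derivative (j+1) p,
            ← Function.iterate_succ_apply' derivative j p]
        push_cast
        ring

noncomputable def uP (n : ℕ) : Polynomial ℝ := ((X : Polynomial ℝ) ^ 2 - 1) ^ n

lemma deriv_uP (n : ℕ) : derivative (uP (n+1)) = (2*((n:Polynomial ℝ)+1)) * (X * uP n) := by
  unfold uP
  rw [derivative_pow, derivative_sub, dX2, derivative_one, Polynomial.C_eq_natCast]
  push_cast
  ring

lemma uP_mul (n : ℕ) : (X^2 - 1) * uP n = uP (n+1) := by
  unfold uP; ring

lemma Wlem (n : ℕ) : (X^2 - 1) * derivative^[n+1] (uP n)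
    = ((n:Polynomial ℝ) * ((n:Polynomial ℝ)+1)) * derivative^[n-1] (uP n) := by
  cases n with
  | zero => simp [uP]
  | succ m =>
    -- (X²-1) * D(uP (m+1)) = 2(m+1) * (X * uP (m+1))   [since (X²-1)*uP m = uP (m+1)]
    have h0 : (X^2 - 1) * derivative (uP (m+1)) = (2*((m:Polynomial ℝ)+1)) * (X * uP (m+1)) := by
      rw [deriv_uP]
      calc (X^2-1) * ((2*((m:Polynomial ℝ)+1)) * (X * uP m))
          = (2*((m:Polynomial ℝ)+1)) * (X * ((X^2-1) * uP m)) := by ring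
        _ = (2*((m:Polynomial ℝ)+1)) * (X * uP (m+1)) := by rw [uP_mul]
    -- apply D^[m+1] to both sides
    have h1 := congrArg (fun q => derivative^[m+1] q) h0
    rw [iterD_q_mul (m+1) (derivative (uP (m+1)))] at h1
    rw [show ((2*((m:Polynomial ℝ)+1)) * (X * uP (m+1))) = ((2*(m+1) : ℕ) : Polynomial ℝ) * (X * uP (m+1)) by
          push_cast; ring,
        Polynomial.iterate_derivative_natCast_mul] at h1
    rw [iterD_X_mul (m+1) (uP (m+1))] at h1
    simp only [Nat.add_sub_cancel] at h1
    -- now h1 relates derivative^[?](derivative (uP (m+1))) with iterates of uP (m+1)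
    rw [← Function.iterate_succ_apply derivative (m+1) (uP (m+1)),
        ← Function.iterate_succ_apply derivative m (uP (m+1))] at h1
    cases m with
    | zero =>
      simp only [Nat.add_sub_cancel] at h1 ⊢
      push_cast at h1 ⊢
      linear_combination h1
    | succ j =>
      rw [show j+1+1-2 = j from rfl] at h1
      rw [← Function.iterate_succ_apply derivative j (uP (j+1+1))] at h1
      simp only [Nat.add_sub_cancel]
      push_cast at h1 ⊢
      linear_combination h1

noncomputable def qP (n : ℕ) : Polynomial ℝ := derivative^[n] (uP n)

lemma qA (n : ℕ) : derivative (qP (n+1))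
    = ((2*(n+1) : ℕ) : Polynomial ℝ) * (X * derivative (qP n) + ((n:Polynomial ℝ)+1) * qP n) := by
  unfold qP
  rw [← Function.iterate_succ_apply' derivative (n+1) (uP (n+1)),
      Function.iterate_succ_apply derivative (n+1) (uP (n+1)),
      deriv_uP n,
      show (2*((n:Polynomial ℝ)+1)) * (X * uP n) = ((2*(n+1) : ℕ) : Polynomial ℝ) * (X * uP n) by
        push_cast; ring,
      Polynomial.iterate_derivative_natCast_mul,
      iterD_X_mul (n+1) (uP n)]
  simp only [Nat.add_sub_cancel]
  rw [← Function.iterate_succ_apply' derivative n (uP n)]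
  push_cast
  ring

lemma qQ (n : ℕ) : qP (n+1)
    = ((2*(n+1) : ℕ) : Polynomial ℝ) * (X * qP n + (n:Polynomial ℝ) * derivative^[n-1] (uP n)) := by
  unfold qP
  rw [Function.iterate_succ_apply derivative n (uP (n+1)),
      deriv_uP n,
      show (2*((n:Polynomial ℝ)+1)) * (X * uP n) = ((2*(n+1) : ℕ) : Polynomial ℝ) * (X * uP n) by
        push_cast; ring,
      Polynomial.iterate_derivative_natCast_mul,
      iterD_X_mul n (uP n)]

lemma qB (n : ℕ) : X * derivative (qP (n+1))
    = ((2*(n+1) : ℕ) : Polynomial ℝ) * derivative (qP n) + ((n:Polynomial ℝ)+1) * qP (n+1) := by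
  rw [qA n, qQ n]
  have w := Wlem n
  rw [show derivative (qP n) = derivative^[n+1] (uP n) from
    (Function.iterate_succ_apply' derivative n (uP n)).symm]
  unfold qP
  push_cast
  linear_combination (2*((n:Polynomial ℝ)+1)) * w

noncomputable def legPoly (n : ℕ) : Polynomial ℝ :=
  C (1 / ((2 : ℝ) ^ n * n.factorial)) * qP n

lemma aScale (n : ℕ) : (C (1 / ((2:ℝ)^(n+1) * (n+1).factorial)) : Polynomial ℝ)
    * ((2*(n+1) : ℕ) : Polynomial ℝ) = C (1 / ((2:ℝ)^n * n.factorial)) := by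
  rw [← Polynomial.C_eq_natCast, ← C_mul]
  congr 1
  have h1 : ((2:ℝ))^n ≠ 0 := by positivity
  have h2 : ((n.factorial : ℝ)) ≠ 0 := by
    exact_mod_cast Nat.cast_ne_zero.mpr n.factorial_ne_zero
  field_simp [Nat.factorial_succ, pow_succ]
  simp only [add_comm 1 n, Nat.factorial_succ]
  push_cast
  ring

lemma pA (n : ℕ) : derivative (legPoly (n+1))
    = X * derivative (legPoly n) + ((n:Polynomial ℝ)+1) * legPoly n := by
  unfold legPoly
  rw [derivative_C_mul, derivative_C_mul, qA n, ← mul_assoc, aScale n]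
  ring

lemma pB (n : ℕ) : X * derivative (legPoly (n+1))
    = derivative (legPoly n) + ((n:Polynomial ℝ)+1) * legPoly (n+1) := by
  unfold legPoly
  rw [derivative_C_mul, derivative_C_mul]
  calc X * (C (1 / ((2:ℝ)^(n+1) * (n+1).factorial)) * derivative (qP (n+1)))
      = C (1 / ((2:ℝ)^(n+1) * (n+1).factorial)) * (X * derivative (qP (n+1))) := by ring
    _ = C (1 / ((2:ℝ)^(n+1) * (n+1).factorial)) *
        (((2*(n+1) : ℕ) : Polynomial ℝ) * derivative (qP n) + ((n:Polynomial ℝ)+1) * qP (n+1)) := by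
        rw [qB n]
    _ = (C (1 / ((2:ℝ)^(n+1) * (n+1).factorial)) * ((2*(n+1) : ℕ) : Polynomial ℝ))
          * derivative (qP n)
        + ((n:Polynomial ℝ)+1) * (C (1 / ((2:ℝ)^(n+1) * (n+1).factorial)) * qP (n+1)) := by ring
    _ = _ := by rw [aScale n]

lemma legPoly_zero : legPoly 0 = 1 := by
  unfold legPoly qP uP
  simp

lemma legPoly_one : legPoly 1 = X := by
  unfold legPoly qP uP
  simp only [pow_one, Function.iterate_one, derivative_sub, derivative_one, dX2, sub_zero,
    Nat.factorial_one, Nat.cast_one, mul_one, pow_one]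
  rw [show (2*X : Polynomial ℝ) = C 2 * X from by rw [map_ofNat], ← mul_assoc, ← C_mul]
  norm_num

lemma starP (m : ℕ) : ((m:Polynomial ℝ)+1) * (legPoly m - legPoly (m+1))
    = (1 - X) * (derivative (legPoly (m+1)) + derivative (legPoly m)) := by
  linear_combination pB m - pA m

lemma sumL (m : ℕ) : ∑ k ∈ Finset.range (m+1), (2*(k:Polynomial ℝ)+1) * legPoly k
    = derivative (legPoly (m+1)) + derivative (legPoly m) := by
  induction m with
  | zero =>
    simp [legPoly_zero, legPoly_one]
  | succ j ih =>
    rw [Finset.sum_range_succ, ih]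
    have hA := pA (j+1)
    have hB := pB j
    push_cast at hA hB ⊢
    linear_combination -hA - hB

lemma keyP (n : ℕ) : 1 - legPoly n
    = (1 - X) * ∑ m ∈ Finset.Icc 1 n, C (1/(m:ℝ)) *
        ∑ k ∈ Finset.range m, (2*(k:Polynomial ℝ)+1) * legPoly k := by
  induction n with
  | zero => simp [legPoly_zero]
  | succ j ih =>
    rw [show Finset.Icc 1 (j+1) = insert (j+1) (Finset.Icc 1 j) from
      (Finset.insert_Icc_right_eq_Icc_add_one (by omega : 1 ≤ j+1)).symm]
    rw [Finset.sum_insert (by simp)]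
    rw [mul_add, ← ih, sumL j]
    have hstar := starP j
    have hC : (C (1/((j:ℝ)+1)) : Polynomial ℝ) * (((j:Polynomial ℝ)+1)) = 1 := by
      rw [show ((j:Polynomial ℝ)+1) = C ((j:ℝ)+1) by
        rw [C_add, C_1, Polynomial.C_eq_natCast], ← C_mul]
      rw [one_div, inv_mul_cancel₀ (by positivity : ((j:ℝ)+1) ≠ 0)]
      simp
    calc 1 - legPoly (j+1)
        = (1 - legPoly j) + (legPoly j - legPoly (j+1)) := by ring
      _ = (1 - legPoly j) + (C (1/((j:ℝ)+1)) * (((j:Polynomial ℝ)+1) * (legPoly j - legPoly (j+1)))) := by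
          rw [← mul_assoc, hC, one_mul]
      _ = (1 - legPoly j) + C (1/((j:ℝ)+1)) *
            ((1-X) * (derivative (legPoly (j+1)) + derivative (legPoly j))) := by rw [hstar]
      _ = _ := by push_cast; ring

lemma legendreP_eq (n : ℕ) (x : ℝ) : legendreP n x = (legPoly n).eval x := by
  unfold legendreP legPoly qP uP
  rw [show (fun y : ℝ => (y ^ 2 - 1) ^ n) = fun y => (((X:Polynomial ℝ)^2-1)^n).eval y by
    funext y; simp]
  rw [iteratedDeriv_eval]
  simp [eval_mul]

lemma key_eval (n : ℕ) (x : ℝ) :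
    1 - legendreP n (2*x-1) = (2*(1-x)) * ∑ m ∈ Finset.Icc 1 n, (1/(m:ℝ)) *
        ∑ k ∈ Finset.range m, (2*(k:ℝ)+1) * legendreP k (2*x-1) := by
  have h := congrArg (fun p => Polynomial.eval (2*x-1) p) (keyP n)
  simp only [eval_sub, eval_one, eval_mul, eval_finset_sum, eval_C, eval_X,
    eval_add, eval_mul, eval_natCast, eval_ofNat] at h
  simp only [legendreP_eq]
  rw [h]
  ring

end Aux

/-- If `f` and `x ↦ f(x)/(1-x)` are square-integrable on `(0,1)` and
`c_k = (2k+1) ∫₀¹ f(x) P̃_k(x) dx` are the Fourier–Legendre coefficients of `f`, then for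
every `n ≥ 0`,
`∫₀¹ (f(x)/(1-x)) P̃_n(x) dx = ∫₀¹ f(x)/(1-x) dx − 2 ∑_{m=1}^n (1/m) ∑_{k=0}^{m-1} c_k`. -/
theorem statement9 (f : ℝ → ℝ)
    (hf : MemLp f 2 (volume.restrict (Set.Ioo (0 : ℝ) 1)))
    (hf2 : MemLp (fun x => f x / (1 - x)) 2 (volume.restrict (Set.Ioo (0 : ℝ) 1)))
    (c : ℕ → ℝ)
    (hc : ∀ k : ℕ, c k = (2 * (k : ℝ) + 1) * ∫ x in Set.Ioo (0 : ℝ) 1, f x * shiftedLegendre k x)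
    (n : ℕ) :
    ∫ x in Set.Ioo (0 : ℝ) 1, (f x / (1 - x)) * shiftedLegendre n x =
      (∫ x in Set.Ioo (0 : ℝ) 1, f x / (1 - x))
        - 2 * ∑ m ∈ Finset.Icc 1 n, (1 / (m : ℝ)) * ∑ k ∈ Finset.range m, c k := by
  set μ := volume.restrict (Set.Ioo (0 : ℝ) 1) with hμ
  have hfin : IsFiniteMeasure μ := by
    constructor
    rw [hμ, Measure.restrict_apply_univ, Real.volume_Ioo]
    norm_num
  set F : ℝ → ℝ := fun x => f x / (1 - x) with hF
  have hcont : ∀ k, Continuous (shiftedLegendre k) := by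
    intro k
    have : shiftedLegendre k = fun x => (legPoly k).eval (2*x - 1) := by
      funext x; rw [shiftedLegendre, legendreP_eq]
    rw [this]
    exact (legPoly k).continuous.comp (by continuity)
  have hbdd : ∀ k, ∀ᵐ x ∂μ, ‖shiftedLegendre k x‖ ≤
      (isCompact_Icc.exists_bound_of_continuousOn (s := Set.Icc (0:ℝ) 1)
        (hcont k).continuousOn).choose := by
    intro k
    have hCs := (isCompact_Icc.exists_bound_of_continuousOn (s := Set.Icc (0:ℝ) 1)
      (hcont k).continuousOn).choose_spec
    rw [hμ, ae_restrict_iff' measurableSet_Ioo]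
    filter_upwards with x hx
    exact hCs x (Set.Ioo_subset_Icc_self hx)
  have hIf : Integrable f μ := hf.integrable one_le_two
  have hIF : Integrable F μ := hf2.integrable one_le_two
  have hmul : ∀ (g : ℝ → ℝ), Integrable g μ → ∀ k,
      Integrable (fun x => g x * shiftedLegendre k x) μ := by
    intro g hg k
    have := Integrable.bdd_mul (f := shiftedLegendre k) (g := g) hg
      (hcont k).aestronglyMeasurable (hbdd k)
    exact this.congr (Filter.Eventually.of_forall fun x => mul_comm _ _)
  have hIfP : ∀ k, Integrable (fun x => f x * shiftedLegendre k x) μ := hmul f hIf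
  have hIFP : Integrable (fun x => F x * shiftedLegendre n x) μ := hmul F hIF n
  -- step 1 : split the integral
  have e1 : ∫ x, F x * shiftedLegendre n x ∂μ
      = (∫ x, F x ∂μ) - ∫ x, (F x - F x * shiftedLegendre n x) ∂μ := by
    rw [integral_sub hIF hIFP]; ring
  -- step 2 : pointwise identity on Ioo
  have e2 : ∫ x, (F x - F x * shiftedLegendre n x) ∂μ
      = ∫ x, (2 * (f x * ∑ m ∈ Finset.Icc 1 n, (1/(m:ℝ)) *
          ∑ k ∈ Finset.range m, (2*(k:ℝ)+1) * shiftedLegendre k x)) ∂μ := by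
    rw [hμ]
    refine setIntegral_congr_fun measurableSet_Ioo ?_
    intro x hx
    have hx1 : (1:ℝ) - x ≠ 0 := by
      have := hx.2; simp only [Set.mem_Ioo] at hx; nlinarith [hx.1, hx.2]
    have hkey := key_eval n x
    simp only
    have hsh : ∀ k, shiftedLegendre k x = legendreP k (2*x-1) := fun k => rfl
    calc F x - F x * shiftedLegendre n x
        = F x * (1 - legendreP n (2*x-1)) := by rw [hsh]; ring
      _ = F x * ((2*(1-x)) * ∑ m ∈ Finset.Icc 1 n, (1/(m:ℝ)) *
            ∑ k ∈ Finset.range m, (2*(k:ℝ)+1) * legendreP k (2*x-1)) := by rw [hkey]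
      _ = _ := by
          simp only [← hsh, hF]
          field_simp
  -- step 3 : compute the right integral
  have e3 : ∫ x, (2 * (f x * ∑ m ∈ Finset.Icc 1 n, (1/(m:ℝ)) *
        ∑ k ∈ Finset.range m, (2*(k:ℝ)+1) * shiftedLegendre k x)) ∂μ
      = 2 * ∑ m ∈ Finset.Icc 1 n, (1 / (m : ℝ)) * ∑ k ∈ Finset.range m, c k := by
    have hrep : (fun x => 2 * (f x * ∑ m ∈ Finset.Icc 1 n, (1/(m:ℝ)) *
          ∑ k ∈ Finset.range m, (2*(k:ℝ)+1) * shiftedLegendre k x))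
        = fun x => ∑ m ∈ Finset.Icc 1 n, (2/(m:ℝ)) *
            ∑ k ∈ Finset.range m, (2*(k:ℝ)+1) * (f x * shiftedLegendre k x) := by
      funext x
      simp only [Finset.mul_sum]
      exact Finset.sum_congr rfl fun m _ => Finset.sum_congr rfl fun k _ => by ring
    rw [hrep]
    rw [integral_finset_sum (μ := μ) (Finset.Icc 1 n)
      (f := fun m x => 2/(m:ℝ) * ∑ k ∈ Finset.range m, (2*(k:ℝ)+1) * (f x * shiftedLegendre k x))
      (fun m _ => ((integrable_finset_sum _
        (fun k _ => ((hIfP k).const_mul (2*(k:ℝ)+1)))).const_mul ((2:ℝ)/m)))]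
    rw [Finset.mul_sum]
    refine Finset.sum_congr rfl fun m _ => ?_
    rw [integral_const_mul _ _,
      integral_finset_sum (μ := μ) (Finset.range m)
        (f := fun k x => (2*(k:ℝ)+1) * (f x * shiftedLegendre k x))
        (fun k _ => ((hIfP k).const_mul (2*(k:ℝ)+1)))]
    have : ∀ k : ℕ, ∫ x, (2*(k:ℝ)+1) * (f x * shiftedLegendre k x) ∂μ = c k := by
      intro k
      rw [integral_const_mul, hc k, hμ]
    simp only [this]
    ring
  rw [hμ] at e1 e2 e3
  rw [e1, e2, e3]
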